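/- Let f(x) = 2x mod 1 be the doubling map on [0,1], and define φ(0) = 0, φ(x) = -1/log(x) for x ∈ (0, 1/2), and φ(x) = 1/log 2 for x ∈ [1/2, 1]. Then φ is monotone increasing on [0,1) and bounded, its total variation equals 1/log 2, but for every n ≥ 1 the n-th variation over the dyadic partition satisfies V_n(φ) ≥ 1/(n log 2); in particular ∑_n V_n(φ) diverges. -/

import Mathlib

open Set

/-- The potential of Example 1: `φ(0)=0`, `φ(x) = -1/log x` on `(0,1/2)`,
`φ(x) = 1/log 2` on `[1/2,1]`. -/
noncomputable def phiEx1 : ℝ → ℝ := fun x =>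
  if x ≤ 0 then 0
  else if x < 1/2 then -1 / Real.log x
  else 1 / Real.log 2

/-- The `n`-th variation of `φ` over the dyadic partition into intervals of length `2^{-n}`. -/
noncomputable def Vdyadic (φ : ℝ → ℝ) (n : ℕ) : ℝ :=
  sSup {d : ℝ | ∃ k : ℕ, k < 2 ^ n ∧
    ∃ x ∈ Ico ((k : ℝ) / 2 ^ n) (((k : ℝ) + 1) / 2 ^ n),
    ∃ y ∈ Ico ((k : ℝ) / 2 ^ n) (((k : ℝ) + 1) / 2 ^ n), d = |φ x - φ y|}

lemma log2_pos : (0:ℝ) < Real.log 2 := Real.log_pos one_lt_two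

lemma phi_nonneg (x : ℝ) : 0 ≤ phiEx1 x := by
  unfold phiEx1
  split_ifs with h1 h2
  · exact le_refl _
  · push_neg at h1
    have hlog : Real.log x < 0 := Real.log_neg h1 (by linarith)
    rw [neg_div]
    have : (1:ℝ) / Real.log x ≤ 0 := div_nonpos_iff.2 (Or.inl ⟨zero_le_one, hlog.le⟩)
    linarith
  · positivity

lemma phi_le (x : ℝ) : phiEx1 x ≤ 1 / Real.log 2 := by
  unfold phiEx1
  split_ifs with h1 h2
  · positivity
  · push_neg at h1
    have hlog : Real.log x ≤ Real.log (1/2) := Real.log_le_log h1 (by linarith)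
    have hhalf : Real.log (1/2 : ℝ) = -Real.log 2 := by
      rw [one_div, Real.log_inv]
    have h2' : Real.log 2 ≤ -Real.log x := by rw [hhalf] at hlog; linarith
    have := one_div_le_one_div_of_le log2_pos h2'
    rw [neg_div]
    have hx : (1:ℝ) / (-Real.log x) = -(1 / Real.log x) := by
      rw [div_neg]
    linarith
  · exact le_refl _

lemma phi_mono : Monotone phiEx1 := by
  intro x y hxy
  by_cases hx0 : x ≤ 0
  · have hx : phiEx1 x = 0 := by simp [phiEx1, hx0]
    rw [hx]; exact phi_nonneg y
  · push_neg at hx0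
    by_cases hy2 : y < 1/2
    · have hx2 : x < 1/2 := lt_of_le_of_lt hxy hy2
      have hy0 : 0 < y := lt_of_lt_of_le hx0 hxy
      have hphix : phiEx1 x = -1 / Real.log x := by
        rw [phiEx1]; simp only [hx0.not_ge, if_false, hx2, if_true]
      have hphiy : phiEx1 y = -1 / Real.log y := by
        rw [phiEx1]; simp only [hy0.not_ge, if_false, hy2, if_true]
      have hlx : Real.log x < 0 := Real.log_neg hx0 (by linarith)
      have hly : Real.log y < 0 := Real.log_neg hy0 (by linarith)
      have hle : Real.log x ≤ Real.log y := Real.log_le_log hx0 hxy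
      have h := one_div_le_one_div_of_le (by linarith : (0:ℝ) < -Real.log y)
        (by linarith : -Real.log y ≤ -Real.log x)
      rw [div_neg, div_neg] at h
      rw [hphix, hphiy, neg_div, neg_div]
      linarith
    · have hy0 : (0:ℝ) < y := by push_neg at hy2; linarith
      have hphiy : phiEx1 y = 1 / Real.log 2 := by
        rw [phiEx1]; simp only [hy0.not_ge, if_false, hy2, if_false]
      rw [hphiy]; exact phi_le x

lemma phi_zero : phiEx1 0 = 0 := by simp [phiEx1]

lemma phi_one : phiEx1 1 = 1 / Real.log 2 := by norm_num [phiEx1]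

lemma Vset_bddAbove (n : ℕ) : BddAbove {d : ℝ | ∃ k : ℕ, k < 2 ^ n ∧
    ∃ x ∈ Ico ((k : ℝ) / 2 ^ n) (((k : ℝ) + 1) / 2 ^ n),
    ∃ y ∈ Ico ((k : ℝ) / 2 ^ n) (((k : ℝ) + 1) / 2 ^ n), d = |phiEx1 x - phiEx1 y|} := by
  refine ⟨1 / Real.log 2, ?_⟩
  rintro d ⟨k, _, x, _, y, _, rfl⟩
  have h1 := phi_nonneg x; have h2 := phi_le x
  have h3 := phi_nonneg y; have h4 := phi_le y
  rw [abs_le]; constructor <;> linarith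

lemma Vset_zero_mem (n : ℕ) : (0:ℝ) ∈ {d : ℝ | ∃ k : ℕ, k < 2 ^ n ∧
    ∃ x ∈ Ico ((k : ℝ) / 2 ^ n) (((k : ℝ) + 1) / 2 ^ n),
    ∃ y ∈ Ico ((k : ℝ) / 2 ^ n) (((k : ℝ) + 1) / 2 ^ n), d = |phiEx1 x - phiEx1 y|} := by
  refine ⟨0, Nat.pow_pos (n := n) (by norm_num), 0, ?_, 0, ?_, by simp⟩ <;>
  · constructor
    · norm_num
    · positivity

lemma Vdyadic_nonneg (n : ℕ) : 0 ≤ Vdyadic phiEx1 n :=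
  le_csSup (Vset_bddAbove n) (Vset_zero_mem n)

lemma Vdyadic_ge (n : ℕ) (hn : 1 ≤ n) : 1 / (n * Real.log 2) ≤ Vdyadic phiEx1 n := by
  rw [Vdyadic, le_csSup_iff (Vset_bddAbove n) ⟨0, Vset_zero_mem n⟩]
  intro b hb
  by_contra hlt
  push_neg at hlt
  -- it suffices to find y ∈ (0, 2^{-n}) with b < phiEx1 y
  have key : ∀ y : ℝ, 0 < y → y < 1 / 2^n → b < phiEx1 y → False := by
    intro y hy0 hy1 hby
    have hmem : |phiEx1 y - phiEx1 0| ∈ {d : ℝ | ∃ k : ℕ, k < 2 ^ n ∧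
        ∃ x ∈ Ico ((k : ℝ) / 2 ^ n) (((k : ℝ) + 1) / 2 ^ n),
        ∃ y ∈ Ico ((k : ℝ) / 2 ^ n) (((k : ℝ) + 1) / 2 ^ n), d = |phiEx1 x - phiEx1 y|} := by
      refine ⟨0, Nat.pow_pos (n := n) (by norm_num), y, ?_, 0, ?_, rfl⟩
      · constructor
        · push_cast; rw [zero_div]; exact hy0.le
        · push_cast; rw [zero_add]; linarith
      · constructor
        · norm_num
        · positivity
    have := hb hmem
    rw [phi_zero, sub_zero, abs_of_nonneg (phi_nonneg y)] at this
    linarith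
  have hpow : (0:ℝ) < 1 / 2^n := by positivity
  have hhalf : (1:ℝ) / 2^n ≤ 1/2 := by
    apply one_div_le_one_div_of_le (by norm_num)
    calc (2:ℝ) = 2^1 := by norm_num
    _ ≤ 2^n := by apply pow_le_pow_right₀ (by norm_num) hn
  rcases le_or_gt b 0 with hb0 | hb0
  · -- take y = 1/2^(n+1)
    set y : ℝ := 1 / 2^(n+1) with hy
    have hy0 : 0 < y := by positivity
    have hy1 : y < 1 / 2^n := by
      apply one_div_lt_one_div_of_lt (by positivity)
      apply pow_lt_pow_right₀ (by norm_num) (by omega)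
    have hyhalf : y < 1/2 := lt_of_lt_of_le hy1 hhalf
    refine key y hy0 hy1 ?_
    have hphi : phiEx1 y = -1 / Real.log y := by
      rw [phiEx1]; simp only [hy0.not_ge, if_false, hyhalf, if_true]
    have hlog : Real.log y < 0 := Real.log_neg hy0 (by linarith)
    have h1 : (1:ℝ) / Real.log y < 0 := one_div_neg.2 hlog
    have : (0:ℝ) < -1 / Real.log y := by rw [neg_div]; linarith
    rw [hphi]; linarith
  · -- take y between exp(-1/b) and 1/2^n
    have hnlog : (0:ℝ) < n * Real.log 2 := by
      have : (0:ℝ) < n := by exact_mod_cast hn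
      positivity
    have h1b : (n:ℝ) * Real.log 2 < 1 / b := by
      have := one_div_lt_one_div_of_lt hb0 hlt
      rwa [one_div_one_div] at this
    set c : ℝ := Real.exp (-(1/b)) with hc
    have hc0 : 0 < c := Real.exp_pos _
    have hc1 : c < 1 / 2^n := by
      have h1 : Real.exp (-(1/b)) < Real.exp (-((n:ℝ) * Real.log 2)) :=
        Real.exp_lt_exp.mpr (by linarith)
      have h2 : Real.exp (-((n:ℝ) * Real.log 2)) = 1 / 2^n := by
        have hlp : ((n:ℝ) * Real.log 2) = Real.log (2^n : ℝ) := (Real.log_pow 2 n).symm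
        rw [Real.exp_neg, hlp, Real.exp_log (by positivity), one_div]
      rw [← h2]; exact h1
    set y : ℝ := (c + 1/2^n) / 2 with hy
    have hy0 : 0 < y := by positivity
    have hy1 : y < 1 / 2^n := by rw [hy]; linarith
    have hyc : c < y := by rw [hy]; linarith
    have hyhalf : y < 1/2 := lt_of_lt_of_le hy1 hhalf
    refine key y hy0 hy1 ?_
    have hphi : phiEx1 y = -1 / Real.log y := by
      rw [phiEx1]; simp only [hy0.not_ge, if_false, hyhalf, if_true]
    have hlogy : Real.log y < 0 := Real.log_neg hy0 (by linarith)
    have hlogc : Real.log c < Real.log y := Real.log_lt_log hc0 hyc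
    rw [hc, Real.log_exp] at hlogc
    -- -(1/b) < log y, so -log y < 1/b, both positive
    have hneg : 0 < -Real.log y := by linarith
    have h1 : -Real.log y < 1/b := by linarith
    have := one_div_lt_one_div_of_lt hneg h1
    rw [one_div_one_div, div_neg] at this
    rw [hphi, neg_div]
    linarith

theorem stmt0 :
    MonotoneOn phiEx1 (Ico (0 : ℝ) 1) ∧
    (∃ M : ℝ, ∀ x ∈ Icc (0 : ℝ) 1, |phiEx1 x| ≤ M) ∧
    eVariationOn phiEx1 (Icc (0 : ℝ) 1) = ENNReal.ofReal (1 / Real.log 2) ∧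
    (∀ n : ℕ, 1 ≤ n → 1 / (n * Real.log 2) ≤ Vdyadic phiEx1 n) ∧
    ¬ Summable (Vdyadic phiEx1) := by
  refine ⟨phi_mono.monotoneOn _, ⟨1 / Real.log 2, fun x _ => ?_⟩, ?_, Vdyadic_ge, ?_⟩
  · rw [abs_of_nonneg (phi_nonneg x)]; exact phi_le x
  · apply le_antisymm
    · have h := (phi_mono.monotoneOn (Icc (0:ℝ) 1)).eVariationOn_le
        (left_mem_Icc.mpr zero_le_one) (right_mem_Icc.mpr zero_le_one)
      rw [inter_self, phi_one, phi_zero, sub_zero] at h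
      exact h
    · have h := eVariationOn.edist_le phiEx1 (left_mem_Icc.mpr (zero_le_one (α := ℝ)))
        (right_mem_Icc.mpr (zero_le_one (α := ℝ)))
      rw [edist_dist, Real.dist_eq, phi_one, phi_zero, zero_sub, abs_neg,
        abs_of_nonneg (by positivity : (0:ℝ) ≤ 1 / Real.log 2)] at h
      exact h
  · intro hsum
    have h1 : Summable (fun n : ℕ => 1 / (n * Real.log 2)) := by
      apply Summable.of_nonneg_of_le (fun n => by positivity) _ hsum
      intro n
      rcases Nat.eq_zero_or_pos n with rfl | hn
      · simpa using Vdyadic_nonneg 0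
      · exact Vdyadic_ge n hn
    have h2 : Summable (fun n : ℕ => 1 / (n:ℝ)) := by
      have heq : (fun n : ℕ => 1 / (n:ℝ)) =
          fun n : ℕ => Real.log 2 * (1 / (n * Real.log 2)) := by
        funext n
        rcases eq_or_ne (n:ℝ) 0 with h | h
        · simp [h]
        · field_simp
      rw [heq]
      exact h1.mul_left _
    exact Real.not_summable_one_div_natCast h2
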